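/- Let n ≥ 1 and let c be a real number. Define 𝒢 : ℝⁿ → ℝⁿ by 𝒢(x)_j = tanh(tanh(x_{j−1}) + tanh(x_j) + c) + tanh(tanh(x_j) + tanh(x_{j+1}) + c) + c, where the indices j − 1 and j + 1 are taken modulo n. If c > 2 + log(2 + √3), then 𝒢 has a globally attracting fixed point (in the sup metric on ℝⁿ). -/

import Mathlib

open Filter

private lemma my_hasDerivAt_tanh (x : ℝ) :
    HasDerivAt Real.tanh (1 / Real.cosh x ^ 2) x := by
  have h := (Real.hasDerivAt_sinh x).div (Real.hasDerivAt_cosh x)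
    (ne_of_gt (Real.cosh_pos x))
  have hfun : (fun y => Real.sinh y / Real.cosh y) = Real.tanh := by
    funext t; rw [Real.tanh_eq_sinh_div_cosh]
  rw [show (Real.sinh / Real.cosh) = fun y => Real.sinh y / Real.cosh y from rfl, hfun] at h
  refine h.congr_deriv ?_
  have := Real.cosh_sq_sub_sinh_sq x
  refine congrArg (· / Real.cosh x ^ 2) ?_
  nlinarith [this]

private lemma tanh_lip_on {a : ℝ} (ha : 0 ≤ a) {u v : ℝ} (hu : a ≤ u) (hv : a ≤ v) :
    |Real.tanh u - Real.tanh v| ≤ (1 / Real.cosh a ^ 2) * |u - v| := by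
  have hconv : Convex ℝ (Set.Ici a) := convex_Ici a
  have hbound : ∀ x ∈ Set.Ici a, ‖(1 / Real.cosh x ^ 2 : ℝ)‖ ≤ 1 / Real.cosh a ^ 2 := by
    intro x hx
    have hca : Real.cosh a ≤ Real.cosh x := by
      rw [Real.cosh_le_cosh, abs_of_nonneg ha, abs_of_nonneg (ha.trans hx)]
      exact hx
    have h1 : (0:ℝ) < Real.cosh a ^ 2 := by positivity
    have h2 : Real.cosh a ^ 2 ≤ Real.cosh x ^ 2 := by
      nlinarith [Real.cosh_pos a, Real.cosh_pos x]
    rw [Real.norm_eq_abs, abs_of_nonneg (by positivity)]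
    exact one_div_le_one_div_of_le h1 h2
  have := hconv.norm_image_sub_le_of_norm_hasDerivWithin_le
    (fun x _ => (my_hasDerivAt_tanh x).hasDerivWithinAt) hbound hv hu
  simpa [Real.norm_eq_abs] using this

private lemma tanh_lip (u v : ℝ) : |Real.tanh u - Real.tanh v| ≤ |u - v| := by
  have hbound : ∀ x ∈ (Set.univ : Set ℝ), ‖(1 / Real.cosh x ^ 2 : ℝ)‖ ≤ 1 := by
    intro x _
    have h1 : (1:ℝ) ≤ Real.cosh x := Real.one_le_cosh x
    rw [Real.norm_eq_abs, abs_of_nonneg (by positivity)]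
    rw [div_le_one (by positivity)]
    nlinarith
  have := (convex_univ (𝕜 := ℝ) (E := ℝ)).norm_image_sub_le_of_norm_hasDerivWithin_le
    (fun x _ => (my_hasDerivAt_tanh x).hasDerivWithinAt) hbound (Set.mem_univ v) (Set.mem_univ u)
  simpa [Real.norm_eq_abs] using this

private lemma neg_one_lt_tanh (x : ℝ) : -1 < Real.tanh x := by
  rw [Real.tanh_eq_sinh_div_cosh, lt_div_iff₀ (Real.cosh_pos x)]
  have := Real.sinh_lt_cosh (-x)
  simp only [Real.sinh_neg, Real.cosh_neg] at this
  linarith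

/-- The restricted network
`𝒢(x)_j = tanh(tanh(x_{j−1}) + tanh(x_j) + c) + tanh(tanh(x_j) + tanh(x_{j+1}) + c) + c`
on `ℝⁿ` (indices mod `n`) has a globally attracting fixed point whenever
`c > 2 + log(2 + √3)`, i.e. `c > 2 + sech⁻¹(1/2)`. -/
theorem restricted_tanh_network_stability
    {n : ℕ} [NeZero n] (c : ℝ)
    (hc : c > 2 + Real.log (2 + Real.sqrt 3)) :
    ∃ p : Fin n → ℝ,
      (fun j => Real.tanh (Real.tanh (p (j - 1)) + Real.tanh (p j) + c) +
          Real.tanh (Real.tanh (p j) + Real.tanh (p (j + 1)) + c) + c) = p ∧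
      ∀ x : Fin n → ℝ,
        Tendsto
          (fun k =>
            (fun x : Fin n → ℝ => fun j =>
              Real.tanh (Real.tanh (x (j - 1)) + Real.tanh (x j) + c) +
                Real.tanh (Real.tanh (x j) + Real.tanh (x (j + 1)) + c) + c)^[k] x)
          atTop (nhds p) := by
  set f : (Fin n → ℝ) → (Fin n → ℝ) := fun x : Fin n → ℝ => fun j =>
      Real.tanh (Real.tanh (x (j - 1)) + Real.tanh (x j) + c) +
        Real.tanh (Real.tanh (x j) + Real.tanh (x (j + 1)) + c) + c with hf
  -- basic numerology
  have hs3 : Real.sqrt 3 ^ 2 = 3 := Real.sq_sqrt (by norm_num)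
  have hs3pos : (0:ℝ) < Real.sqrt 3 := Real.sqrt_pos.mpr (by norm_num)
  have hspos : (0:ℝ) < 2 + Real.sqrt 3 := by linarith
  have hlog_nonneg : 0 ≤ Real.log (2 + Real.sqrt 3) := Real.log_nonneg (by linarith)
  have ha : 0 ≤ c - 2 := by linarith
  -- cosh (log (2 + √3)) = 2
  have hcosh_log : Real.cosh (Real.log (2 + Real.sqrt 3)) = 2 := by
    rw [Real.cosh_eq, Real.exp_log hspos, Real.exp_neg, Real.exp_log hspos]
    rw [div_eq_iff (by norm_num : (2:ℝ) ≠ 0)]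
    field_simp
    nlinarith [hs3]
  have hcosh : 2 < Real.cosh (c - 2) := by
    calc (2:ℝ) = Real.cosh (Real.log (2 + Real.sqrt 3)) := hcosh_log.symm
    _ < Real.cosh (c - 2) := by
        rw [Real.cosh_lt_cosh, abs_of_nonneg hlog_nonneg, abs_of_nonneg ha]
        linarith
  set L : ℝ := 1 / Real.cosh (c - 2) ^ 2 with hL
  have hLpos : 0 < L := by positivity
  have hL4 : 4 * L < 1 := by
    rw [hL]
    rw [mul_one_div, div_lt_one (by positivity)]
    nlinarith
  set K : NNReal := ⟨4 * L, by positivity⟩ with hK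
  have hKval : (K : ℝ) = 4 * L := rfl
  have hK1 : K < 1 := by
    rw [← NNReal.coe_lt_coe, hKval, NNReal.coe_one]; exact hL4
  -- contraction
  have hcontr : ContractingWith K f := by
    constructor
    · exact hK1
    · apply LipschitzWith.of_dist_le_mul
      intro x y
      rw [dist_pi_le_iff (by positivity)]
      intro j
      rw [Real.dist_eq]
      have hbd : ∀ i : Fin n, |Real.tanh (x i) - Real.tanh (y i)| ≤ dist x y := by
        intro i
        calc |Real.tanh (x i) - Real.tanh (y i)| ≤ |x i - y i| := tanh_lip _ _
          _ = dist (x i) (y i) := (Real.dist_eq _ _).symm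
          _ ≤ dist x y := dist_le_pi_dist x y i
      have harg : ∀ u v : ℝ, c - 2 ≤ Real.tanh u + Real.tanh v + c := by
        intro u v
        have := neg_one_lt_tanh u
        have := neg_one_lt_tanh v
        linarith
      have key : ∀ a b a' b' : Fin n → ℝ, ∀ i₁ i₂ : Fin n,
          |Real.tanh (Real.tanh (x i₁) + Real.tanh (x i₂) + c) -
            Real.tanh (Real.tanh (y i₁) + Real.tanh (y i₂) + c)| ≤ 2 * L * dist x y := by
        intro _ _ _ _ i₁ i₂
        calc |Real.tanh (Real.tanh (x i₁) + Real.tanh (x i₂) + c) -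
              Real.tanh (Real.tanh (y i₁) + Real.tanh (y i₂) + c)|
            ≤ L * |(Real.tanh (x i₁) + Real.tanh (x i₂) + c) -
                (Real.tanh (y i₁) + Real.tanh (y i₂) + c)| :=
              tanh_lip_on ha (harg _ _) (harg _ _)
          _ ≤ L * (|Real.tanh (x i₁) - Real.tanh (y i₁)| +
                |Real.tanh (x i₂) - Real.tanh (y i₂)|) := by
              apply mul_le_mul_of_nonneg_left _ hLpos.le
              have : (Real.tanh (x i₁) + Real.tanh (x i₂) + c) -
                  (Real.tanh (y i₁) + Real.tanh (y i₂) + c) =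
                  (Real.tanh (x i₁) - Real.tanh (y i₁)) +
                  (Real.tanh (x i₂) - Real.tanh (y i₂)) := by ring
              rw [this]
              exact abs_add_le _ _
          _ ≤ L * (dist x y + dist x y) := by
              apply mul_le_mul_of_nonneg_left _ hLpos.le
              exact add_le_add (hbd i₁) (hbd i₂)
          _ = 2 * L * dist x y := by ring
      have h1 := key x y x y (j - 1) j
      have h2 := key x y x y j (j + 1)
      calc |f x j - f y j|
          = |(Real.tanh (Real.tanh (x (j - 1)) + Real.tanh (x j) + c) -
              Real.tanh (Real.tanh (y (j - 1)) + Real.tanh (y j) + c)) +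
             (Real.tanh (Real.tanh (x j) + Real.tanh (x (j + 1)) + c) -
              Real.tanh (Real.tanh (y j) + Real.tanh (y (j + 1)) + c))| := by
            simp only [hf]; ring_nf
        _ ≤ _ + _ := abs_add_le _ _
        _ ≤ 2 * L * dist x y + 2 * L * dist x y := add_le_add h1 h2
        _ = (K : ℝ) * dist x y := by rw [hKval]; ring
  refine ⟨hcontr.fixedPoint f, ?_, ?_⟩
  · exact hcontr.fixedPoint_isFixedPt
  · intro x
    exact hcontr.tendsto_iterate_fixedPoint x
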